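/- If a 3-SAT instance C with m clauses over n ≥ 3 variables is satisfiable, then ξ(C) ≥ (m/2)·( (8/7)·m/(8·binom(n,3)) − 1 ) = (m/2)·( m/(7·binom(n,3)) − 1 ). -/

import Mathlib

open scoped Classical

/-- A literal over `n` Boolean variables: a (variable, sign) pair. -/
abbrev Lit (n : ℕ) := Fin n × Bool

/-- A clause: a set of three literals whose three variables are pairwise distinct. -/
abbrev Clause (n : ℕ) :=
  {s : Finset (Lit n) // s.card = 3 ∧ (s.image Prod.fst).card = 3}

/-- A 3-SAT instance: a sequence of `m` clauses over `n` variables. -/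
abbrev SatInstance (n m : ℕ) := Fin m → Clause n

/-- The assignment `σ` makes at least one literal of clause `c` true. -/
def Satisfies {n : ℕ} (σ : Fin n → Bool) (c : Clause n) : Prop :=
  ∃ ℓ ∈ c.1, σ ℓ.1 = ℓ.2

/-- The instance `C` is satisfiable. -/
def SAT {n m : ℕ} (C : SatInstance n m) : Prop :=
  ∃ σ : Fin n → Bool, ∀ i, Satisfies σ (C i)

/-- Probability of the event `P` under the distribution (weight function) `D`. -/
noncomputable def pr {α : Type*} [Fintype α] (D : α → ℝ) (P : α → Prop) : ℝ :=
  ∑ a ∈ Finset.univ.filter P, D a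

/-- `D` is a probability distribution on the finite type `α`. -/
def IsDistribution {α : Type*} [Fintype α] (D : α → ℝ) : Prop :=
  (∀ a, 0 ≤ D a) ∧ ∑ a, D a = 1

/-- The clauses of a random instance drawn from `D` are `k`-wise independent with
uniform marginals: any `k` clauses at distinct positions are jointly uniform,
each over the `M = 8 * (n choose 3)` possible clauses.
`IsDistribution D ∧ KWiseUniform n m k D` says `D ∈ 𝔇_k(n,m)`. -/
def KWiseUniform (n m k : ℕ) (D : SatInstance n m → ℝ) : Prop :=
  ∀ idx : Fin k → Fin m, Function.Injective idx →
    ∀ t : Fin k → Clause n,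
      pr D (fun C => ∀ j, C (idx j) = t j) = (1 / (8 * (n.choose 3 : ℝ))) ^ k

/-- `ξ(C)`: the number of unordered pairs `{i, j}` with `i ≠ j` and `c_i = c_j`. -/
noncomputable def xi {n m : ℕ} (C : SatInstance n m) : ℕ :=
  (Finset.univ.filter fun p : Fin m × Fin m => p.1 < p.2 ∧ C p.1 = C p.2).card

/-- An edge index of the bipartite multigraph `G(C)`: a clause position together with the
literal serving as the right endpoint (the left endpoint is the remaining literal pair). -/
abbrev EdgeIdx (n m : ℕ) := Fin m × Lit n

/-- `e` is an actual edge of the multigraph `G(C)`. -/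
def isEdge {n m : ℕ} (C : SatInstance n m) (e : EdgeIdx n m) : Prop :=
  e.2 ∈ (C e.1).1

/-- The left endpoint (pair of literals) of the edge `e` of `G(C)`. -/
def leftV {n m : ℕ} (C : SatInstance n m) (e : EdgeIdx n m) : Finset (Lit n) :=
  (C e.1).1.erase e.2

/-- `s` is a `K_{2,2}`-edge-set of the multigraph `G(C)`: four edges of the form
`u–v, u–v', u'–v, u'–v'` with `u ≠ u'` and `v ≠ v'`. -/
def IsK22 {n m : ℕ} (C : SatInstance n m) (s : Finset (EdgeIdx n m)) : Prop :=
  s.card = 4 ∧ (∀ e ∈ s, isEdge C e) ∧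
  ∃ u u' : Finset (Lit n), ∃ v v' : Lit n, u ≠ u' ∧ v ≠ v' ∧
    s.image (fun e => (leftV C e, e.2)) = {(u, v), (u, v'), (u', v), (u', v')}

/-- `κ(C)`: the number of `K_{2,2}`-edge-sets of the multigraph `G(C)`. -/
noncomputable def kappa {n m : ℕ} (C : SatInstance n m) : ℕ :=
  (Finset.univ.filter fun s : Finset (EdgeIdx n m) => IsK22 C s).card

/-- Adjacency in the simple bipartite graph `G(C̃)` of a set `T` of distinct clauses:
the literal pair `u` is adjacent to the literal `v`. -/
def adjSet {n : ℕ} (T : Finset (Clause n)) (u : Finset (Lit n)) (v : Lit n) : Prop :=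
  v ∉ u ∧ ∃ c ∈ T, c.1 = insert v u

/-- `κ(C̃)` for a set `T` of pairwise distinct clauses: the number of `K_{2,2}` subgraphs of
the simple bipartite graph `G(C̃)`, computed as `Σ_{{v,v'}} binom(|B_{v,v'}|, 2)`. -/
noncomputable def kappaSet {n : ℕ} (T : Finset (Clause n)) : ℕ :=
  ∑ p ∈ (Finset.univ : Finset (Lit n)).powersetCard 2,
    ((Finset.univ.filter fun u : Finset (Lit n) => ∀ v ∈ p, adjSet T u v).card).choose 2

/-- `m̃(C)`: the number of pairwise distinct clauses occurring in `C`. -/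
noncomputable def distinctCount {n m : ℕ} (C : SatInstance n m) : ℕ :=
  (Finset.univ.image C).card

/-- The set of the three variables of a clause. -/
def clVars {n : ℕ} (c : Clause n) : Finset (Fin n) := c.1.image Prod.fst

/-- `f` lists (the indices of) hyperedges of the variable hypergraph of `C` forming a
Berge path: consecutive hyperedges share exactly one vertex, non-consecutive ones
are disjoint. -/
def IsBergePathOrder {n m : ℕ} (C : SatInstance n m) {k : ℕ} (f : Fin k → Fin m) : Prop :=
  Function.Injective f ∧
  (∀ i j : Fin k, (j : ℕ) = (i : ℕ) + 1 →
    (clVars (C (f i)) ∩ clVars (C (f j))).card = 1) ∧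
  (∀ i j : Fin k, i ≠ j → (j : ℕ) ≠ (i : ℕ) + 1 → (i : ℕ) ≠ (j : ℕ) + 1 →
    Disjoint (clVars (C (f i))) (clVars (C (f j))))

/-- `j` follows `i` cyclically in `Fin ℓ`. -/
def CycConsec (ℓ : ℕ) (i j : Fin ℓ) : Prop := (j : ℕ) = ((i : ℕ) + 1) % ℓ

/-- `f` lists (the indices of) hyperedges of the variable hypergraph of `C` forming a
Berge cycle (of length `ℓ ≥ 3`): cyclically consecutive hyperedges share exactly one
vertex, non-consecutive ones are disjoint. -/
def IsBergeCycleOrder {n m : ℕ} (C : SatInstance n m) {ℓ : ℕ} (f : Fin ℓ → Fin m) : Prop :=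
  Function.Injective f ∧
  (∀ i j : Fin ℓ, CycConsec ℓ i j →
    (clVars (C (f i)) ∩ clVars (C (f j))).card = 1) ∧
  (∀ i j : Fin ℓ, i ≠ j → ¬ CycConsec ℓ i j → ¬ CycConsec ℓ j i →
    Disjoint (clVars (C (f i))) (clVars (C (f j))))

/-- The number of `k`-element sets of hyperedge indices of the variable hypergraph of `C`
that form a Berge path of length `k`. -/
noncomputable def bergePathSetCount (n m k : ℕ) (C : SatInstance n m) : ℕ :=
  (Finset.univ.filter fun s : Finset (Fin m) =>
    s.card = k ∧ ∃ f : Fin k → Fin m, (∀ i, f i ∈ s) ∧ IsBergePathOrder C f).card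

/-- The number of `ℓ`-element sets of hyperedge indices of the variable hypergraph of `C`
that form a Berge cycle of length `ℓ`. -/
noncomputable def bergeCycleSetCount (n m ℓ : ℕ) (C : SatInstance n m) : ℕ :=
  (Finset.univ.filter fun s : Finset (Fin m) =>
    s.card = ℓ ∧ ∃ f : Fin ℓ → Fin m, (∀ i, f i ∈ s) ∧ IsBergeCycleOrder C f).card

section AuxStmt5

variable {n : ℕ}

lemma clause_sign_unique (c : Clause n) {v : Fin n} {b b' : Bool}
    (h1 : (v, b) ∈ c.1) (h2 : (v, b') ∈ c.1) : b = b' := by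
  have hinj : Set.InjOn Prod.fst (c.1 : Set (Lit n)) :=
    Finset.injOn_of_card_image_eq (by rw [c.2.2, c.2.1])
  exact congrArg Prod.snd (hinj h1 h2 rfl)

lemma psi_eq (c : Clause n) {ℓ : Lit n} (hℓ : ℓ ∈ c.1) :
    (if (ℓ.1, true) ∈ c.1 then true else false) = ℓ.2 := by
  obtain ⟨v, b⟩ := ℓ
  by_cases h : (v, true) ∈ c.1
  · simpa [h] using clause_sign_unique c h hℓ
  · cases b with
    | true => exact absurd hℓ h
    | false => simp [h]

lemma clause_ext_of_psi {c c' : Clause n} (hV : clVars c = clVars c')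
    (hψ : ∀ v : Fin n, v ∈ clVars c →
      ((if (v, true) ∈ c.1 then true else false) = (if (v, true) ∈ c'.1 then true else false))) :
    c = c' := by
  have key : ∀ (d d' : Clause n), clVars d = clVars d' →
      (∀ v : Fin n, v ∈ clVars d →
        ((if (v, true) ∈ d.1 then true else false) = (if (v, true) ∈ d'.1 then true else false))) →
      ∀ ℓ ∈ d.1, ℓ ∈ d'.1 := by
    intro d d' hV hψ ℓ hℓ
    have hv : ℓ.1 ∈ clVars d := Finset.mem_image_of_mem Prod.fst hℓ
    have hv' : ℓ.1 ∈ clVars d' := hV ▸ hv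
    obtain ⟨ℓ', hℓ', hfst⟩ := Finset.mem_image.mp hv'
    have e1 : (if (ℓ.1, true) ∈ d.1 then true else false) = ℓ.2 := psi_eq d hℓ
    have e2 : (if (ℓ'.1, true) ∈ d'.1 then true else false) = ℓ'.2 := psi_eq d' hℓ'
    rw [hfst] at e2
    have hsnd : ℓ'.2 = ℓ.2 := by rw [← e1, ← e2, hψ ℓ.1 hv]
    have : ℓ' = ℓ := Prod.ext hfst hsnd
    rwa [← this]
  apply Subtype.ext
  apply Finset.Subset.antisymm
  · exact fun ℓ hℓ => key c c' hV hψ ℓ hℓ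
  · exact fun ℓ hℓ => key c' c hV.symm (fun v hv => (hψ v (hV ▸ hv)).symm) ℓ hℓ

lemma satCount (σ : Fin n → Bool) (S : Finset (Clause n))
    (hS : ∀ c ∈ S, Satisfies σ c) : S.card ≤ 7 * n.choose 3 := by
  classical
  have hfib : S.card = ∑ V ∈ (Finset.univ : Finset (Fin n)).powersetCard 3,
      (S.filter fun c => clVars c = V).card := by
    apply Finset.card_eq_sum_card_fiberwise
    intro c _
    rw [Finset.mem_coe, Finset.mem_powersetCard]
    exact ⟨Finset.subset_univ _, c.2.2⟩
  rw [hfib]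
  calc ∑ V ∈ (Finset.univ : Finset (Fin n)).powersetCard 3,
        (S.filter fun c => clVars c = V).card
      ≤ ∑ _V ∈ (Finset.univ : Finset (Fin n)).powersetCard 3, 7 := by
        apply Finset.sum_le_sum
        intro V hV
        have hVcard : V.card = 3 := (Finset.mem_powersetCard.mp hV).2
        set bad : {v // v ∈ V} → Bool := fun v => !σ v.1 with hbad
        have h7 : ((Finset.univ : Finset ({v // v ∈ V} → Bool)).erase bad).card = 7 := by
          rw [Finset.card_erase_of_mem (Finset.mem_univ _), Finset.card_univ]
          rw [Fintype.card_fun, Fintype.card_coe, hVcard]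
          norm_num
        rw [← h7]
        apply Finset.card_le_card_of_injOn
          (fun c (v : {v // v ∈ V}) => if ((v : Fin n), true) ∈ c.1 then true else false)
        · intro c hc
          rw [Finset.mem_coe, Finset.mem_filter] at hc
          obtain ⟨hcS, hcV⟩ := hc
          rw [Finset.mem_coe, Finset.mem_erase]
          refine ⟨?_, Finset.mem_univ _⟩
          obtain ⟨ℓ, hℓ, hσ⟩ := hS c hcS
          have hv : ℓ.1 ∈ V := hcV ▸ Finset.mem_image_of_mem Prod.fst hℓ
          intro heq
          have := congrFun heq ⟨ℓ.1, hv⟩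
          beta_reduce at this
          rw [psi_eq c hℓ] at this
          simp only [hbad] at this
          rw [← hσ] at this
          simp at this
        · intro c hc c' hc' heq
          rw [Finset.mem_coe, Finset.mem_filter] at hc hc'
          apply clause_ext_of_psi (hc.2.trans hc'.2.symm)
          intro v hv
          have hvV : v ∈ V := hc.2 ▸ hv
          exact congrFun heq ⟨v, hvV⟩
    _ = 7 * n.choose 3 := by
        rw [Finset.sum_const, Finset.card_powersetCard, Finset.card_univ,
          Fintype.card_fin, smul_eq_mul, mul_comm]

end AuxStmt5

/-- If a 3-SAT instance `C` with `m` clauses over `n ≥ 3` variables is satisfiable, then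
`ξ(C) ≥ (m/2)·(m/(7·binom(n,3)) − 1)`. -/
theorem stmt5 (n m : ℕ) (hn : 3 ≤ n) (C : SatInstance n m) (h : SAT C) :
    ((m : ℝ) / 2) * ((m : ℝ) / (7 * (n.choose 3 : ℝ)) - 1) ≤ (xi C : ℝ) := by
  classical
  obtain ⟨σ, hσ⟩ := h
  set S : Finset (Clause n) := Finset.univ.image C with hSdef
  set f : Clause n → ℕ := fun c => (Finset.univ.filter fun i => C i = c).card with hfdef
  -- (1) sum of multiplicities is m
  have hsum : ∑ c ∈ S, f c = m := by
    have := (Finset.card_eq_sum_card_image C (Finset.univ : Finset (Fin m))).symm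
    simpa using this
  -- (2) sum of squares = m + 2 ξ
  set A : Finset (Fin m × Fin m) := Finset.univ.filter (fun p => C p.1 = C p.2) with hAdef
  have hA1 : A.card = ∑ c ∈ S, f c * f c := by
    have hfib : A.card = ∑ c ∈ S, (A.filter fun p => C p.1 = c).card :=
      Finset.card_eq_sum_card_fiberwise (fun p hp => Finset.mem_image_of_mem C (Finset.mem_univ p.1))
    rw [hfib]
    apply Finset.sum_congr rfl
    intro c _
    have : A.filter (fun p => C p.1 = c) =
        (Finset.univ.filter fun i => C i = c) ×ˢ (Finset.univ.filter fun i => C i = c) := by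
      ext ⟨i, j⟩
      simp only [hAdef, Finset.mem_filter, Finset.mem_product, Finset.mem_univ, true_and]
      constructor
      · rintro ⟨h1, h2⟩; exact ⟨h2, h1 ▸ h2⟩
      · rintro ⟨h1, h2⟩; exact ⟨h1.trans h2.symm, h1⟩
    rw [this, Finset.card_product]
  have hA2 : A.card = m + 2 * xi C := by
    have h1 : (A.filter fun p => p.1 < p.2).card + (A.filter fun p => ¬ p.1 < p.2).card = A.card :=
      Finset.card_filter_add_card_filter_not _
    have h2 : ((A.filter fun p => ¬ p.1 < p.2).filter fun p => p.2 < p.1).card +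
        ((A.filter fun p => ¬ p.1 < p.2).filter fun p => ¬ p.2 < p.1).card =
        (A.filter fun p => ¬ p.1 < p.2).card :=
      Finset.card_filter_add_card_filter_not _
    have hX : (A.filter fun p => p.1 < p.2).card = xi C := by
      unfold xi
      congr 1
      ext p
      simp only [hAdef, Finset.mem_filter, Finset.mem_univ, true_and]
      tauto
    have hY : ((A.filter fun p => ¬ p.1 < p.2).filter fun p => p.2 < p.1).card = xi C := by
      unfold xi
      apply Finset.card_bij (fun p _ => (p.2, p.1))
      · intro p hp
        simp only [hAdef, Finset.mem_filter, Finset.mem_univ, true_and] at hp ⊢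
        exact ⟨hp.2, hp.1.1.symm⟩
      · intro p hp q hq hpq
        simpa [Prod.ext_iff, and_comm] using hpq
      · intro p hp
        refine ⟨(p.2, p.1), ?_, rfl⟩
        simp only [hAdef, Finset.mem_filter, Finset.mem_univ, true_and] at hp ⊢
        exact ⟨⟨hp.2.symm, not_lt.mpr (le_of_lt hp.1)⟩, hp.1⟩
    have hD : ((A.filter fun p => ¬ p.1 < p.2).filter fun p => ¬ p.2 < p.1).card = m := by
      have : ((A.filter fun p => ¬ p.1 < p.2).filter fun p => ¬ p.2 < p.1) =
          Finset.univ.image (fun i : Fin m => (i, i)) := by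
        ext p
        simp only [hAdef, Finset.mem_filter, Finset.mem_univ, true_and, Finset.mem_image]
        constructor
        · rintro ⟨⟨_, h1⟩, h2⟩
          exact ⟨p.1, Prod.ext rfl (le_antisymm (not_lt.mp h1) (not_lt.mp h2)).symm⟩
        · rintro ⟨i, rfl⟩
          simp
      rw [this, Finset.card_image_of_injective _ (fun a b hab => (Prod.ext_iff.mp hab).1),
        Finset.card_univ, Fintype.card_fin]
    omega
  -- (3) number of distinct clauses is at most 7 * C(n,3)
  have hScard : S.card ≤ 7 * n.choose 3 := by
    apply satCount σ
    intro c hc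
    obtain ⟨i, _, rfl⟩ := Finset.mem_image.mp hc
    exact hσ i
  -- Cauchy–Schwarz in ℝ
  have hCS : ((m : ℝ)) ^ 2 ≤ (S.card : ℝ) * ((m : ℝ) + 2 * (xi C : ℝ)) := by
    have := sq_sum_le_card_mul_sum_sq (s := S) (f := fun c => (f c : ℝ))
    have e1 : ∑ c ∈ S, ((f c : ℝ)) = (m : ℝ) := by
      rw [← hsum]; push_cast; ring
    have e2 : ∑ c ∈ S, ((f c : ℝ)) ^ 2 = (m : ℝ) + 2 * (xi C : ℝ) := by
      have : ∑ c ∈ S, f c * f c = m + 2 * xi C := hA1 ▸ hA2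
      have := congrArg (fun x : ℕ => (x : ℝ)) this
      push_cast at this
      rw [← this]
      apply Finset.sum_congr rfl
      intro c _
      ring
    rw [e1, e2] at this
    exact this
  have hc0 : (0 : ℝ) < 7 * (n.choose 3 : ℝ) := by
    have : 0 < n.choose 3 := Nat.choose_pos hn
    positivity
  have hkey : ((m : ℝ)) ^ 2 ≤ 7 * (n.choose 3 : ℝ) * ((m : ℝ) + 2 * (xi C : ℝ)) := by
    calc ((m : ℝ)) ^ 2 ≤ (S.card : ℝ) * ((m : ℝ) + 2 * (xi C : ℝ)) := hCS
      _ ≤ 7 * (n.choose 3 : ℝ) * ((m : ℝ) + 2 * (xi C : ℝ)) := by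
          apply mul_le_mul_of_nonneg_right
          · exact_mod_cast hScard
          · positivity
  rw [div_mul_eq_mul_div, div_le_iff₀ (by norm_num : (0:ℝ) < 2)]
  have hrw : (m:ℝ) * ((m:ℝ) / (7 * (n.choose 3 : ℝ)) - 1) =
      ((m:ℝ) * (m:ℝ) - (m:ℝ) * (7 * (n.choose 3 : ℝ))) / (7 * (n.choose 3 : ℝ)) := by
    field_simp
    have hne : (n.choose 3 : ℝ) ≠ 0 := Nat.cast_ne_zero.mpr (Nat.choose_pos hn).ne'
    rw [eq_div_iff hne, mul_assoc, sub_mul, div_mul_cancel₀ _ hne]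
  rw [hrw, div_le_iff₀ hc0]
  nlinarith [hkey]
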